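/- Let M be a real symmetric positive definite 2n×2n matrix and Ω := {z ∈ ℝ^{2n} : Mz·z ≤ ℏ}. Then the symplectic ℏ-polar dual of Ω is the ellipsoid Ω^{ℏ,ω} = {z ∈ ℝ^{2n} : (−J M⁻¹ J)z·z ≤ ℏ} = J(Ω^ℏ), where Ω^ℏ = {z' : z'·z ≤ ℏ for all z ∈ Ω} is the ordinary ℏ-polar dual of Ω in ℝ^{2n}. -/

import Mathlib

open Matrix Set

noncomputable section

/-- The standard symplectic matrix `J = [[0, I],[-I, 0]]` on `ℝ²ⁿ = ℝⁿ ⊕ ℝⁿ`. -/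
def J (n : ℕ) : Matrix (Fin n ⊕ Fin n) (Fin n ⊕ Fin n) ℝ :=
  Matrix.fromBlocks 0 1 (-1) 0

/-- The standard symplectic form `ω(z,z') = p·x' - p'·x = (Jz)·z'`. -/
def symplForm {n : ℕ} (z z' : Fin n ⊕ Fin n → ℝ) : ℝ :=
  (J n).mulVec z ⬝ᵥ z'

/-- The symplectic ℏ-polar dual `Ω^{ℏ,ω} = {z' : ω(z,z') ≤ ℏ for all z ∈ Ω}`. -/
def symplDual {n : ℕ} (ℏ : ℝ) (Ω : Set (Fin n ⊕ Fin n → ℝ)) : Set (Fin n ⊕ Fin n → ℝ) :=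
  {z' | ∀ z ∈ Ω, symplForm z z' ≤ ℏ}

/-- The ordinary ℏ-polar dual of `Ω ⊆ ℝ²ⁿ` (identifying `ℝ²ⁿ` with its dual). -/
def polarDual2n {n : ℕ} (ℏ : ℝ) (Ω : Set (Fin n ⊕ Fin n → ℝ)) : Set (Fin n ⊕ Fin n → ℝ) :=
  {z' | ∀ z ∈ Ω, z' ⬝ᵥ z ≤ ℏ}

lemma J_transp (n : ℕ) : (_root_.J n)ᵀ = -(_root_.J n) := by
  simp [_root_.J, Matrix.fromBlocks_transpose, Matrix.fromBlocks_neg]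

lemma J_sq (n : ℕ) : _root_.J n * _root_.J n = -1 := by
  have : -(1 : Matrix (Fin n ⊕ Fin n) (Fin n ⊕ Fin n) ℝ) =
      Matrix.fromBlocks (-1) (-0) (-0) (-1) := by
    rw [← Matrix.fromBlocks_neg, Matrix.fromBlocks_one]
  simp [_root_.J, Matrix.fromBlocks_multiply, this]

/-- symmetry of a real hermitian matrix as a bilinear form. -/
lemma mulVec_dotProduct_symm {m : Type*} [Fintype m] {B : Matrix m m ℝ}
    (hB : B.IsHermitian) (x y : m → ℝ) :
    B.mulVec x ⬝ᵥ y = B.mulVec y ⬝ᵥ x := by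
  have hBt : Bᵀ = B := by
    rw [← Matrix.conjTranspose_eq_transpose_of_trivial]; exact hB
  calc B.mulVec x ⬝ᵥ y = y ⬝ᵥ B.mulVec x := dotProduct_comm _ _
    _ = Bᵀ.mulVec y ⬝ᵥ x := by
        rw [Matrix.mulVec_transpose, ← Matrix.dotProduct_mulVec]
    _ = B.mulVec y ⬝ᵥ x := by rw [hBt]

/-- Cauchy–Schwarz for a real positive semidefinite bilinear form. -/
lemma posSemidef_cauchy_schwarz {m : Type*} [Fintype m] {B : Matrix m m ℝ}
    (hB : B.PosSemidef) (x y : m → ℝ) :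
    (B.mulVec x ⬝ᵥ y) ^ 2 ≤ (B.mulVec x ⬝ᵥ x) * (B.mulVec y ⬝ᵥ y) := by
  have key : ∀ t : ℝ, 0 ≤ (B.mulVec y ⬝ᵥ y) * (t * t)
      + (2 * (B.mulVec x ⬝ᵥ y)) * t + (B.mulVec x ⬝ᵥ x) := by
    intro t
    have h0 : 0 ≤ B.mulVec (x + t • y) ⬝ᵥ (x + t • y) := by
      have := hB.dotProduct_mulVec_nonneg (x + t • y)
      simpa [dotProduct_comm] using this
    have hsymm := mulVec_dotProduct_symm hB.1 x y
    calc (0:ℝ) ≤ B.mulVec (x + t • y) ⬝ᵥ (x + t • y) := h0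
      _ = (B.mulVec y ⬝ᵥ y) * (t * t)
          + (2 * (B.mulVec x ⬝ᵥ y)) * t + (B.mulVec x ⬝ᵥ x) := by
        simp [Matrix.mulVec_add, Matrix.mulVec_smul, dotProduct_add, add_dotProduct,
          dotProduct_smul, smul_dotProduct, smul_eq_mul, hsymm]
        ring
  have hd := discrim_le_zero key
  rw [discrim] at hd
  nlinarith [hd]

/-- The ordinary polar dual of the ellipsoid `{z : Mz·z ≤ ℏ}` is `{w : M⁻¹w·w ≤ ℏ}`. -/
lemma polarDual_ellipsoid {n : ℕ} (ℏ : ℝ) (hℏ : 0 < ℏ)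
    (M : Matrix (Fin n ⊕ Fin n) (Fin n ⊕ Fin n) ℝ) (hM : M.PosDef) :
    polarDual2n ℏ {z | M.mulVec z ⬝ᵥ z ≤ ℏ} = {w | M⁻¹.mulVec w ⬝ᵥ w ≤ ℏ} := by
  have hMinv : M⁻¹.PosDef := hM.inv
  have hMM : M * M⁻¹ = 1 := Matrix.mul_nonsing_inv M hM.det_pos.ne'.isUnit
  have hMu : ∀ w, M.mulVec (M⁻¹.mulVec w) = w := by
    intro w; rw [Matrix.mulVec_mulVec, hMM, Matrix.one_mulVec]
  ext w
  simp only [polarDual2n, mem_setOf_eq]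
  constructor
  · intro hw
    set s : ℝ := M⁻¹.mulVec w ⬝ᵥ w with hs
    have hs0 : 0 ≤ s := by
      have := hMinv.posSemidef.dotProduct_mulVec_nonneg w
      simpa [hs, dotProduct_comm] using this
    rcases eq_or_lt_of_le hs0 with h0 | hpos
    · rw [← h0]; exact hℏ.le
    · set t : ℝ := Real.sqrt (ℏ / s) with htdef
      have ht : 0 < t := Real.sqrt_pos.2 (div_pos hℏ hpos)
      have ht2 : t * t = ℏ / s := Real.mul_self_sqrt (div_pos hℏ hpos).le
      set z : Fin n ⊕ Fin n → ℝ := t • (M⁻¹.mulVec w) with hz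
      have hzmem : M.mulVec z ⬝ᵥ z ≤ ℏ := by
        have : M.mulVec z ⬝ᵥ z = (t * t) * s := by
          simp [hz, Matrix.mulVec_smul, smul_dotProduct, dotProduct_smul, smul_eq_mul,
            hMu w, hs, dotProduct_comm]
          ring
        rw [this, ht2, div_mul_cancel₀ _ hpos.ne']
      have hwz : w ⬝ᵥ z ≤ ℏ := hw z hzmem
      have hwzval : w ⬝ᵥ z = t * s := by
        simp [hz, dotProduct_smul, smul_eq_mul, hs, dotProduct_comm]
      rw [hwzval] at hwz
      -- from t * s ≤ ℏ = (t*t) * s, 0 < t, 0 < s deduce s ≤ ℏ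
      have hts : (t * t) * s = ℏ := by rw [ht2, div_mul_cancel₀ _ hpos.ne']
      nlinarith [mul_pos ht hpos, sq_nonneg (t - 1)]
  · intro hw z hz
    have hcs := posSemidef_cauchy_schwarz hM.posSemidef (M⁻¹.mulVec w) z
    rw [hMu w] at hcs
    have h1 : M.mulVec (M⁻¹.mulVec w) ⬝ᵥ (M⁻¹.mulVec w) = M⁻¹.mulVec w ⬝ᵥ w := by
      rw [hMu w, dotProduct_comm]
    rw [hMu w] at h1
    rw [h1] at hcs
    have hle : (w ⬝ᵥ z) ^ 2 ≤ ℏ * ℏ := by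
      calc (w ⬝ᵥ z)^2 ≤ (M⁻¹.mulVec w ⬝ᵥ w) * (M.mulVec z ⬝ᵥ z) := hcs
        _ ≤ ℏ * ℏ := by
          apply mul_le_mul hw hz ?_ hℏ.le
          have := hM.posSemidef.dotProduct_mulVec_nonneg z
          simpa [dotProduct_comm] using this
    nlinarith [hle, hℏ]

/-- for a symmetric positive definite `M` and `Ω = {z : Mz·z ≤ ℏ}`,
`Ω^{ℏ,ω} = {z : (-J M⁻¹ J) z · z ≤ ℏ} = J(Ω^ℏ)`. -/
theorem symplDual_of_ellipsoid
    {n : ℕ} (ℏ : ℝ) (hℏ : 0 < ℏ)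
    (M : Matrix (Fin n ⊕ Fin n) (Fin n ⊕ Fin n) ℝ) (hM : M.PosDef)
    (Ω : Set (Fin n ⊕ Fin n → ℝ)) (hΩ : Ω = {z | M.mulVec z ⬝ᵥ z ≤ ℏ}) :
    symplDual ℏ Ω = {z | (-(J n * M⁻¹ * J n)).mulVec z ⬝ᵥ z ≤ ℏ}
    ∧ symplDual ℏ Ω = (fun z => (J n).mulVec z) '' polarDual2n ℏ Ω := by
  -- symplForm z z' = ((-J) z') ⬝ᵥ z
  have hform : ∀ z z' : Fin n ⊕ Fin n → ℝ,
      symplForm z z' = (-(J n)).mulVec z' ⬝ᵥ z := by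
    intro z z'
    calc symplForm z z' = z' ⬝ᵥ (J n).mulVec z := dotProduct_comm _ _
      _ = (J n)ᵀ.mulVec z' ⬝ᵥ z := by
          rw [Matrix.mulVec_transpose, ← Matrix.dotProduct_mulVec]
      _ = (-(J n)).mulVec z' ⬝ᵥ z := by rw [J_transp]
  have hdual : ∀ z' : Fin n ⊕ Fin n → ℝ,
      z' ∈ symplDual ℏ Ω ↔ (-(J n)).mulVec z' ∈ polarDual2n ℏ Ω := by
    intro z'
    constructor
    · intro h z hz; rw [← hform z z']; exact h z hz
    · intro h z hz; rw [hform z z']; exact h z hz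
  have hpolar : polarDual2n ℏ Ω = {w | M⁻¹.mulVec w ⬝ᵥ w ≤ ℏ} := by
    rw [hΩ]; exact polarDual_ellipsoid ℏ hℏ M hM
  constructor
  · ext z'
    rw [mem_setOf_eq, hdual z', hpolar, mem_setOf_eq]
    have : M⁻¹.mulVec ((-(J n)).mulVec z') ⬝ᵥ ((-(J n)).mulVec z')
        = (-(J n * M⁻¹ * J n)).mulVec z' ⬝ᵥ z' := by
      rw [Matrix.mulVec_mulVec]
      calc (M⁻¹ * -(J n)).mulVec z' ⬝ᵥ (-(J n)).mulVec z'
          = ((-(J n))ᵀ).mulVec ((M⁻¹ * -(J n)).mulVec z') ⬝ᵥ z' := by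
            rw [dotProduct_comm, Matrix.mulVec_transpose, ← Matrix.dotProduct_mulVec,
              dotProduct_comm]
        _ = (-(J n * M⁻¹ * J n)).mulVec z' ⬝ᵥ z' := by
            have hm : J n * (M⁻¹ * -J n) = -(J n * M⁻¹ * J n) := by
              rw [mul_neg, mul_neg, mul_assoc]
            rw [Matrix.transpose_neg, J_transp, neg_neg, Matrix.mulVec_mulVec, hm]
    rw [this]
  · ext z'
    rw [hdual z']
    constructor
    · intro h
      refine ⟨(-(J n)).mulVec z', h, ?_⟩
      show (J n).mulVec ((-(J n)).mulVec z') = z'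
      rw [Matrix.mulVec_mulVec, mul_neg, J_sq]
      simp
    · rintro ⟨w, hw, rfl⟩
      show (-(J n)).mulVec ((J n).mulVec w) ∈ polarDual2n ℏ Ω
      rw [Matrix.mulVec_mulVec, neg_mul, J_sq]
      simpa using hw
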